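/- Let C be a k-dimensional linear code over a finite field F_q with q elements and let 1 ≤ i < k. Then the generalized Hamming weights satisfy q^{k−i}(q^i − 1) · d_k ≥ (q^k − 1) · d_i, with equality if and only if all i-dimensional subcodes of C have the same weight. -/

import Mathlib

open Module

lemma prod_identity_int (q : ℤ) (i : ℕ) : ∀ a : ℕ,
    (q ^ (i+a+1) - 1) * ∏ j ∈ Finset.range i, (q ^ (i+a) - q ^ j)
      = (q ^ (a+1) - 1) * ∏ j ∈ Finset.range i, (q ^ (i+a+1) - q ^ j) := by
  induction i with
  | zero => intro a; simp
  | succ i ih =>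
    intro a
    have h := ih (a+1)
    have e1 : i + (a + 1) = i + 1 + a := by ring
    rw [e1] at h
    rw [Finset.prod_range_succ, Finset.prod_range_succ]
    linear_combination (q ^ (i+1+a) - q ^ i) * h

lemma prod_identity (q i a : ℕ) (hq : 1 ≤ q) :
    (q ^ (i+a+1) - 1) * ∏ j ∈ Finset.range i, (q ^ (i+a) - q ^ j)
      = (q ^ (a+1) - 1) * ∏ j ∈ Finset.range i, (q ^ (i+a+1) - q ^ j) := by
  have key := prod_identity_int (q : ℤ) i a
  have hprod : ∀ m : ℕ, i ≤ m → ((∏ j ∈ Finset.range i, (q ^ m - q ^ j) : ℕ) : ℤ)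
      = ∏ j ∈ Finset.range i, ((q:ℤ) ^ m - (q:ℤ) ^ j) := by
    intro m hm
    rw [Nat.cast_prod]
    refine Finset.prod_congr rfl fun j hj => ?_
    rw [Nat.cast_sub (Nat.pow_le_pow_right hq (le_trans (Finset.mem_range.mp hj).le hm))]
    push_cast; ring
  have hsub : ∀ m : ℕ, ((q ^ m - 1 : ℕ) : ℤ) = (q:ℤ) ^ m - 1 := by
    intro m
    rw [Nat.cast_sub (Nat.one_le_pow m q hq)]; push_cast; ring
  rw [← Nat.cast_inj (R := ℤ), Nat.cast_mul, Nat.cast_mul, hprod _ (by omega),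
    hprod _ (by omega), hsub, hsub]
  exact key

lemma card_finrank_subspaces {F W : Type*} [Field F] [Fintype F] [AddCommGroup W] [Module F W]
    [Finite W] {i : ℕ} (hi : i ≤ finrank F W) :
    Nat.card {D : Submodule F W // finrank F D = i} *
      ∏ j ∈ Finset.range i, (Fintype.card F ^ i - Fintype.card F ^ j)
    = ∏ j ∈ Finset.range i, (Fintype.card F ^ finrank F W - Fintype.card F ^ j) := by
  classical
  let f : {s : Fin i → W // LinearIndependent F s} → {D : Submodule F W // finrank F D = i} :=
    fun s => ⟨Submodule.span F (Set.range s.1), by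
      rw [finrank_span_eq_card s.2, Fintype.card_fin]⟩
  have hfiber : ∀ D : {D : Submodule F W // finrank F D = i},
      Nat.card {s // f s = D}
        = ∏ j ∈ Finset.range i, (Fintype.card F ^ i - Fintype.card F ^ j) := by
    intro D
    have e : {s // f s = D} ≃ {t : Fin i → D.1 // LinearIndependent F t} := by
      refine ⟨fun s => ⟨fun j => ⟨s.1.1 j, ?_⟩, ?_⟩, fun t => ⟨⟨fun j => (t.1 j : W), ?_⟩, ?_⟩, ?_, ?_⟩
      · have hspan : Submodule.span F (Set.range s.1.1) = D.1 := congrArg Subtype.val s.2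
        exact hspan ▸ Submodule.subset_span (Set.mem_range_self j)
      · apply LinearIndependent.of_comp D.1.subtype
        exact s.1.2
      · exact t.2.map' D.1.subtype (Submodule.ker_subtype _)
      · apply Subtype.ext
        show Submodule.span F (Set.range fun j => (t.1 j : W)) = D.1
        have : (fun j => (t.1 j : W)) = D.1.subtype ∘ t.1 := rfl
        rw [this, Set.range_comp, Submodule.span_image]
        have htop : Submodule.span F (Set.range t.1) = ⊤ := by
          apply Submodule.eq_top_of_finrank_eq
          rw [finrank_span_eq_card t.2, Fintype.card_fin, D.2]
        rw [htop, Submodule.map_subtype_top]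
      · intro s; apply Subtype.ext; apply Subtype.ext; rfl
      · intro t; apply Subtype.ext; funext j; apply Subtype.ext; rfl
    rw [Nat.card_congr e]
    have : Finite D.1 := Subtype.finite
    rw [card_linearIndependent (K := F) (V := D.1) (by rw [D.2]), D.2]
    exact Fin.prod_univ_eq_prod_range (fun j => Fintype.card F ^ i - Fintype.card F ^ j) i
  have htot : Nat.card {s : Fin i → W // LinearIndependent F s}
      = Nat.card {D : Submodule F W // finrank F D = i} *
        ∏ j ∈ Finset.range i, (Fintype.card F ^ i - Fintype.card F ^ j) := by
    haveI : Finite (Submodule F W) := Finite.of_injective _ SetLike.coe_injective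
    haveI fD : Fintype {D : Submodule F W // finrank F D = i} := Fintype.ofFinite _
    haveI fS : ∀ D : {D : Submodule F W // finrank F D = i}, Fintype {s // f s = D} :=
      fun D => Fintype.ofFinite _
    rw [Nat.card_congr (Equiv.sigmaFiberEquiv f).symm, Nat.card_eq_fintype_card,
      Fintype.card_sigma,
      Finset.sum_congr rfl (fun D _ => (Nat.card_eq_fintype_card).symm.trans (hfiber D)),
      Finset.sum_const, smul_eq_mul, Nat.card_eq_fintype_card, Finset.card_univ]
  rw [← htot, card_linearIndependent hi]
  exact Fin.prod_univ_eq_prod_range (fun j => Fintype.card F ^ finrank F W - Fintype.card F ^ j) i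

lemma card_subspaces_le {F V : Type*} [Field F] [AddCommGroup V] [Module F V]
    (W : Submodule F V) (i : ℕ) :
    Nat.card {D : Submodule F V // D ≤ W ∧ finrank F D = i}
      = Nat.card {D : Submodule F W // finrank F D = i} := by
  apply Nat.card_congr
  refine Equiv.symm (((Submodule.MapSubtype.orderIso W).toEquiv.subtypeEquiv ?_).trans
    (Equiv.subtypeSubtypeEquivSubtypeInter _ _))
  intro D
  show finrank F D = i ↔ _
  rw [← Submodule.finrank_map_subtype_eq W D]
  rfl

lemma hyperplane_finrank {F : Type*} [Field F] {n k : ℕ} [Fintype F]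
    (C : Submodule F (Fin n → F)) (hk : Module.finrank F C = k)
    (x : Fin n) (c : Fin n → F) (hc : c ∈ C) (hcx : c x ≠ 0) :
    finrank F ↥(C ⊓ LinearMap.ker (LinearMap.proj x : (Fin n → F) →ₗ[F] F)) = k - 1 := by
  classical
  set f : ↥C →ₗ[F] F := (LinearMap.proj x).comp C.subtype with hf
  have hrange : finrank F (LinearMap.range f) = 1 := by
    have hne : LinearMap.range f ≠ ⊥ := by
      intro h
      have : f ⟨c, hc⟩ = 0 := by
        have := LinearMap.mem_range_self f ⟨c, hc⟩
        rw [h] at this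
        exact (Submodule.mem_bot F).mp this
      exact hcx this
    have h1 : finrank F (LinearMap.range f) ≤ finrank F F := Submodule.finrank_le _
    rw [finrank_self] at h1
    have h0 : 0 < finrank F (LinearMap.range f) := by
      rw [← Submodule.one_le_finrank_iff] at hne
      · omega
    omega
  have hrn := LinearMap.finrank_range_add_finrank_ker f
  rw [hk, hrange] at hrn
  have hmap : (LinearMap.ker f).map C.subtype
      = C ⊓ LinearMap.ker (LinearMap.proj x : (Fin n → F) →ₗ[F] F) := by
    ext v
    simp only [Submodule.mem_map, LinearMap.mem_ker, Submodule.mem_inf]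
    constructor
    · rintro ⟨⟨w, hw⟩, hker, rfl⟩
      exact ⟨hw, hker⟩
    · rintro ⟨hv, hker⟩
      exact ⟨⟨v, hv⟩, hker, rfl⟩
  rw [← hmap, Submodule.finrank_map_subtype_eq]
  omega

lemma exists_subcode {F : Type*} [Field F] {n : ℕ} [Fintype F]
    (C : Submodule F (Fin n → F)) {i : ℕ} (hi : i ≤ finrank F C) :
    ∃ D : Submodule F (Fin n → F), D ≤ C ∧ finrank F D = i := by
  classical
  have b := Module.finBasis F ↥C
  set u : Fin i → ↥C := b ∘ Fin.castLE hi with hu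
  have hli : LinearIndependent F u := b.linearIndependent.comp _ (Fin.castLE_injective hi)
  refine ⟨(Submodule.span F (Set.range u)).map C.subtype, Submodule.map_subtype_le _ _, ?_⟩
  rw [Submodule.finrank_map_subtype_eq, finrank_span_eq_card hli, Fintype.card_fin]


/-- The support of a subcode `D` of `F_q^n`. -/
def codeSupp {F : Type*} [Field F] {n : ℕ} (D : Submodule F (Fin n → F)) : Set (Fin n) :=
  {x | ∃ d ∈ D, d x ≠ 0}

/-- The weight of a subcode: the cardinality of its support. -/
noncomputable def codeWt {F : Type*} [Field F] {n : ℕ} (D : Submodule F (Fin n → F)) : ℕ :=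
  (codeSupp D).ncard

/-- The `i`-th generalized Hamming weight of a code `C`. -/
noncomputable def dGHW {F : Type*} [Field F] {n : ℕ} (C : Submodule F (Fin n → F)) (i : ℕ) : ℕ :=
  sInf {m | ∃ D : Submodule F (Fin n → F), D ≤ C ∧ Module.finrank F D = i ∧ codeWt D = m}

/-- `q^(k-i) * (q^i - 1) * d_k ≥ (q^k - 1) * d_i` for `1 ≤ i < k`, with equality if and
only if all `i`-dimensional subcodes of `C` have the same weight. -/
theorem dk_di_inequality
    {F : Type*} [Field F] [Fintype F] {n k q i : ℕ} (hq : Fintype.card F = q)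
    (C : Submodule F (Fin n → F)) (hk : Module.finrank F C = k)
    (hi1 : 1 ≤ i) (hik : i < k) :
    q ^ (k - i) * (q ^ i - 1) * dGHW C k ≥ (q ^ k - 1) * dGHW C i ∧
    (q ^ (k - i) * (q ^ i - 1) * dGHW C k = (q ^ k - 1) * dGHW C i ↔
      ∀ D D' : Submodule F (Fin n → F), D ≤ C → D' ≤ C →
        Module.finrank F D = i → Module.finrank F D' = i → codeWt D = codeWt D') := by
  classical
  subst hq
  set Q := Fintype.card F with hQ
  have hq2 : 2 ≤ Q := Fintype.one_lt_card
  haveI : Finite (Submodule F (Fin n → F)) := Finite.of_injective _ SetLike.coe_injective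
  haveI : Fintype (Submodule F (Fin n → F)) := Fintype.ofFinite _
  -- d_k = codeWt C
  have hdk : dGHW C k = codeWt C := by
    have hset : {m | ∃ D : Submodule F (Fin n → F), D ≤ C ∧ finrank F D = k ∧ codeWt D = m}
        = {codeWt C} := by
      ext m
      simp only [Set.mem_setOf_eq, Set.mem_singleton_iff]
      constructor
      · rintro ⟨D, hDC, hDr, rfl⟩
        have : D = C := Submodule.eq_of_le_of_finrank_le hDC (by rw [hDr, hk])
        rw [this]
      · rintro rfl; exact ⟨C, le_rfl, hk, rfl⟩
    rw [dGHW, hset, csInf_singleton]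
  set di := dGHW C i with hdi
  -- d_i facts
  have hSine : {m | ∃ D : Submodule F (Fin n → F), D ≤ C ∧ finrank F D = i ∧ codeWt D = m}.Nonempty := by
    obtain ⟨D, hDC, hDr⟩ := exists_subcode C (i := i) (by rw [hk]; omega)
    exact ⟨codeWt D, D, hDC, hDr, rfl⟩
  have hdi_le : ∀ D : Submodule F (Fin n → F), D ≤ C → finrank F D = i → di ≤ codeWt D :=
    fun D hDC hDr => Nat.sInf_le ⟨D, hDC, hDr, rfl⟩
  have hdi_mem : ∃ D : Submodule F (Fin n → F), D ≤ C ∧ finrank F D = i ∧ codeWt D = di :=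
    Nat.sInf_mem hSine
  -- the finset of i-dimensional subcodes
  set SS : Finset (Submodule F (Fin n → F)) :=
    Finset.univ.filter (fun D => D ≤ C ∧ finrank F D = i) with hSS
  have hcardsub : ∀ p : Submodule F (Fin n → F) → Prop, ∀ _ : DecidablePred p,
      (Finset.univ.filter p).card = Nat.card {D // p D} := by
    intro p hp
    rw [Nat.card_eq_fintype_card, Fintype.card_subtype]
  set N : ℕ := Nat.card {D : Submodule F (Fin n → F) // D ≤ C ∧ finrank F D = i} with hN
  have hSScard : SS.card = N := by rw [hSS]; exact hcardsub _ _
  have hN_pos : 0 < N := by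
    rw [hN, Nat.card_pos_iff]
    obtain ⟨D, hDC, hDr⟩ := exists_subcode C (i := i) (by rw [hk]; omega)
    exact ⟨⟨⟨D, hDC, hDr⟩⟩, inferInstance⟩
  -- counting constants
  have h1k : 1 ≤ Q ^ k := Nat.one_le_pow _ _ (by omega)
  have hQk1 : 0 < Q ^ k - 1 := by
    have : Q ≤ Q ^ k := Nat.le_self_pow (by omega) Q
    omega
  set c : ℕ := ∏ j ∈ Finset.range i, (Q ^ i - Q ^ j) with hc
  have hc_pos : 0 < c := by
    apply Finset.prod_pos
    intro j hj
    have := Nat.pow_lt_pow_right (a := Q) (by omega) (Finset.mem_range.mp hj)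
    omega
  have hNc : N * c = ∏ j ∈ Finset.range i, (Q ^ k - Q ^ j) := by
    rw [hN, card_subspaces_le C i]
    have := card_finrank_subspaces (F := F) (W := ↥C) (i := i) (by rw [hk]; omega)
    rw [hk] at this
    exact this
  -- the per-coordinate count
  have hstep3 : ∀ x ∈ codeSupp C,
      (Q ^ k - 1) * (SS.filter (fun D => x ∈ codeSupp D)).card
        = Q ^ (k - i) * (Q ^ i - 1) * N := by
    intro x hx
    obtain ⟨cv, hcv, hcvx⟩ := hx
    set Wx : Submodule F (Fin n → F) :=
      C ⊓ LinearMap.ker (LinearMap.proj x : (Fin n → F) →ₗ[F] F) with hWx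
    have hWr : finrank F Wx = k - 1 := hyperplane_finrank C hk x cv hcv hcvx
    set N₁ : ℕ := Nat.card {D : Submodule F (Fin n → F) // D ≤ Wx ∧ finrank F D = i} with hN₁
    have hN₁c : N₁ * c = ∏ j ∈ Finset.range i, (Q ^ (k-1) - Q ^ j) := by
      rw [hN₁, card_subspaces_le Wx i]
      have := card_finrank_subspaces (F := F) (W := ↥Wx) (i := i) (by rw [hWr]; omega)
      rw [hWr] at this
      exact this
    -- key identity
    have hkey : (Q ^ k - 1) * N₁ = (Q ^ (k - i) - 1) * N := by
      have hid := prod_identity Q i (k - i - 1) (by omega)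
      have e1 : i + (k - i - 1) + 1 = k := by omega
      have e2 : i + (k - i - 1) = k - 1 := by omega
      have e3 : k - i - 1 + 1 = k - i := by omega
      rw [e1, e2, e3] at hid
      apply Nat.eq_of_mul_eq_mul_right hc_pos
      calc (Q ^ k - 1) * N₁ * c = (Q ^ k - 1) * (N₁ * c) := mul_assoc _ _ _
        _ = (Q ^ (k - i) - 1) * (N * c) := by rw [hN₁c, hNc]; exact hid
        _ = (Q ^ (k - i) - 1) * N * c := (mul_assoc _ _ _).symm
    -- the complement filter
    have hcompl : (SS.filter (fun D => x ∉ codeSupp D)).card = N₁ := by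
      have : SS.filter (fun D => x ∉ codeSupp D)
          = Finset.univ.filter (fun D => D ≤ Wx ∧ finrank F D = i) := by
        rw [hSS, Finset.filter_filter]
        apply Finset.filter_congr
        intro D _
        simp only [hWx, le_inf_iff]
        constructor
        · rintro ⟨⟨hDC, hDr⟩, hns⟩
          refine ⟨⟨hDC, fun v hv => ?_⟩, hDr⟩
          by_contra hvx
          exact hns ⟨v, hv, hvx⟩
        · rintro ⟨⟨hDC, hDker⟩, hDr⟩
          refine ⟨⟨hDC, hDr⟩, ?_⟩
          rintro ⟨v, hv, hvx⟩
          exact hvx (hDker hv)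
      rw [this, hN₁]
      exact hcardsub _ _
    have hsplit : (SS.filter (fun D => x ∈ codeSupp D)).card
        + (SS.filter (fun D => x ∉ codeSupp D)).card = SS.card :=
      Finset.card_filter_add_card_filter_not (p := fun D => x ∈ codeSupp D)
    rw [hcompl, hSScard] at hsplit
    -- conclude
    have hN₁N : N₁ ≤ N := by
      have h1 : (Q ^ (k-i) - 1) ≤ (Q ^ k - 1) := by
        have : Q ^ (k - i) ≤ Q ^ k := Nat.pow_le_pow_right (by omega) (by omega)
        omega
      by_contra hcon
      push_neg at hcon
      have hlt : (Q ^ (k-i) - 1) * N < (Q ^ k - 1) * N₁ := by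
        calc (Q ^ (k-i) - 1) * N ≤ (Q ^ k - 1) * N := Nat.mul_le_mul_right _ h1
          _ < (Q ^ k - 1) * N₁ := mul_lt_mul_of_pos_left hcon hQk1
      rw [hkey] at hlt
      exact lt_irrefl _ hlt
    have hcnt : (SS.filter (fun D => x ∈ codeSupp D)).card = N - N₁ := by omega
    rw [hcnt]
    -- (Q^k - 1) * (N - N₁) = Q^(k-i) * (Q^i - 1) * N
    have hqe : Q ^ (k - i) * Q ^ i = Q ^ k := by rw [← pow_add]; congr 1; omega
    have h1k : 1 ≤ Q ^ k := Nat.one_le_pow _ _ (by omega)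
    have h1i : 1 ≤ Q ^ i := Nat.one_le_pow _ _ (by omega)
    have h1ki : 1 ≤ Q ^ (k - i) := Nat.one_le_pow _ _ (by omega)
    zify [hN₁N, h1k, h1i]
    have hz1 : ((Q:ℤ)^k - 1) * N₁ = ((Q:ℤ)^(k-i) - 1) * N := by
      have := hkey
      zify [h1k, h1ki] at this
      exact this
    have hzq : ((Q:ℤ)) ^ (k - i) * (Q:ℤ) ^ i = (Q:ℤ) ^ k := by exact_mod_cast hqe
    linear_combination (-1 : ℤ) * hz1 - (N : ℤ) * hzq
  -- coordinates outside the support contribute nothing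
  have hstep2 : ∀ x : Fin n, x ∉ codeSupp C →
      (SS.filter (fun D => x ∈ codeSupp D)).card = 0 := by
    intro x hx
    rw [Finset.card_eq_zero, Finset.filter_eq_empty_iff]
    intro D hD
    rw [hSS, Finset.mem_filter] at hD
    rintro ⟨v, hv, hvx⟩
    exact hx ⟨v, hD.2.1 hv, hvx⟩
  -- double counting
  have hswap : ∑ D ∈ SS, codeWt D
      = ∑ x : Fin n, (SS.filter (fun D => x ∈ codeSupp D)).card := by
    have h1 : ∀ D : Submodule F (Fin n → F),
        codeWt D = ∑ x : Fin n, (if x ∈ codeSupp D then 1 else 0) := by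
      intro D
      rw [codeWt, Set.ncard_eq_toFinset_card']
      rw [show (codeSupp D).toFinset = Finset.univ.filter (fun x => x ∈ codeSupp D) by
        ext x; simp]
      exact Finset.card_filter _ _
    rw [Finset.sum_congr rfl (fun D _ => h1 D), Finset.sum_comm]
    exact Finset.sum_congr rfl (fun x _ => (Finset.card_filter _ _).symm)
  have hmain : (Q ^ k - 1) * ∑ D ∈ SS, codeWt D
      = Q ^ (k - i) * (Q ^ i - 1) * N * codeWt C := by
    rw [hswap, Finset.mul_sum]
    rw [← Finset.sum_subset (Finset.filter_subset (fun x => x ∈ codeSupp C) Finset.univ)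
      (fun x _ hx => by
        rw [hstep2 x (by simpa using hx), Nat.mul_zero])]
    rw [Finset.sum_congr rfl (fun x hx => hstep3 x (by simpa using (Finset.mem_filter.mp hx).2)),
      Finset.sum_const, smul_eq_mul]
    have : (Finset.univ.filter (fun x => x ∈ codeSupp C)).card = codeWt C := by
      rw [codeWt, Set.ncard_eq_toFinset_card']
      congr 1
      ext x; simp
    rw [this, mul_comm]
  -- lower bound for the sum
  have hsum_ge : N * di ≤ ∑ D ∈ SS, codeWt D := by
    rw [← hSScard]
    have := Finset.card_nsmul_le_sum SS codeWt di (fun D hD => by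
      rw [hSS, Finset.mem_filter] at hD
      exact hdi_le D hD.2.1 hD.2.2)
    simpa [smul_eq_mul] using this
  constructor
  · -- the inequality
    rw [ge_iff_le, hdk]
    refine Nat.le_of_mul_le_mul_right ?_ hN_pos
    calc (Q ^ k - 1) * di * N = (Q ^ k - 1) * (N * di) := by
          rw [mul_right_comm, mul_assoc]
      _ ≤ (Q ^ k - 1) * ∑ D ∈ SS, codeWt D := Nat.mul_le_mul_left _ hsum_ge
      _ = Q ^ (k - i) * (Q ^ i - 1) * N * codeWt C := hmain
      _ = Q ^ (k - i) * (Q ^ i - 1) * codeWt C * N := mul_right_comm _ _ _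
  · rw [hdk]
    constructor
    · -- equality implies all weights equal
      intro heq
      have hSmem : ∀ D : Submodule F (Fin n → F), D ≤ C → finrank F D = i → codeWt D = di := by
        have hsum_eq : ∑ D ∈ SS, codeWt D = N * di := by
          have h2 : (Q ^ k - 1) * ∑ D ∈ SS, codeWt D = (Q ^ k - 1) * (N * di) := by
            calc (Q ^ k - 1) * ∑ D ∈ SS, codeWt D
                = Q ^ (k - i) * (Q ^ i - 1) * N * codeWt C := hmain
              _ = Q ^ (k - i) * (Q ^ i - 1) * codeWt C * N := mul_right_comm _ _ _
              _ = (Q ^ k - 1) * di * N := by rw [heq]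
              _ = (Q ^ k - 1) * (N * di) := by rw [mul_right_comm, mul_assoc]
          exact Nat.eq_of_mul_eq_mul_left hQk1 h2
        intro D hDC hDr
        by_contra hne
        have hmemSS : D ∈ SS := by rw [hSS, Finset.mem_filter]; exact ⟨Finset.mem_univ _, hDC, hDr⟩
        have hlt : N * di < ∑ D ∈ SS, codeWt D := by
          rw [← hSScard]
          calc SS.card * di = ∑ _D ∈ SS, di := by rw [Finset.sum_const, smul_eq_mul]
            _ < ∑ D ∈ SS, codeWt D := by
              apply Finset.sum_lt_sum
              · intro E hE
                rw [hSS, Finset.mem_filter] at hE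
                exact hdi_le E hE.2.1 hE.2.2
              · exact ⟨D, hmemSS, lt_of_le_of_ne (hdi_le D hDC hDr) (Ne.symm hne)⟩
        omega
      intro D D' hDC hD'C hDr hD'r
      rw [hSmem D hDC hDr, hSmem D' hD'C hD'r]
    · -- all weights equal implies equality
      intro hall
      obtain ⟨D0, hD0C, hD0r, hD0w⟩ := hdi_mem
      have hsum_eq : ∑ D ∈ SS, codeWt D = N * di := by
        have hcongr : ∑ D ∈ SS, codeWt D = ∑ _D ∈ SS, di :=
          Finset.sum_congr rfl (fun D hD => by
            rw [hSS, Finset.mem_filter] at hD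
            exact (hall D D0 hD.2.1 hD0C hD.2.2 hD0r).trans hD0w)
        rw [hcongr, Finset.sum_const, smul_eq_mul, hSScard]
      apply Nat.eq_of_mul_eq_mul_right hN_pos
      calc Q ^ (k - i) * (Q ^ i - 1) * codeWt C * N
          = Q ^ (k - i) * (Q ^ i - 1) * N * codeWt C := mul_right_comm _ _ _
        _ = (Q ^ k - 1) * ∑ D ∈ SS, codeWt D := hmain.symm
        _ = (Q ^ k - 1) * (N * di) := by rw [hsum_eq]
        _ = (Q ^ k - 1) * di * N := by rw [mul_comm N di, ← mul_assoc]
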